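/- arXiv:1505.01973 — 2 statements merged into one kernel-verified Lean document; each statement's English description precedes it below -/
import Mathlib

section
/- Let φ be an aromatic forest. For a partition p of φ into subgraphs each of which is an aromatic tree (connected up to the assignment convention: formed by cutting a set of edges and assigning each rootless component to a rooted component), let χ(p) be the skeleton obtained by collapsing each part to a single vertex. Then the number of labelled partitions refining p (bijective assignments of the parts to the vertices of χ(p) compatible with the collapse) equals |Aut(χ(p))|. -/
open scoped Classical

/-- An aromatic forest: finite directed graph with out-degree at most one. -/
structure AForest where
  n : ℕ
  out : Fin n → Option (Fin n)

/-- Isomorphism of aromatic forests. -/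
def AForest.Iso (φ ψ : AForest) : Prop :=
  ∃ e : Fin φ.n ≃ Fin ψ.n, ∀ v, ψ.out (e v) = (φ.out v).map e

/-- The single-vertex rooted tree `•`. -/
def dot : AForest := ⟨1, fun _ => none⟩

/-- The 1-loop: one vertex with a self-loop. -/
def loopA : AForest := ⟨1, fun i => some i⟩

/-- An aromatic tree: an aromatic forest with exactly one root. -/
def IsATree (τ : AForest) : Prop := ∃! r : Fin τ.n, τ.out r = none

/-- The graph obtained by cutting the outgoing edges of the vertices in `D`. -/
def AForest.cut (φ : AForest) (D : Finset (Fin φ.n)) : AForest :=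
  ⟨φ.n, fun v => if v ∈ D then none else φ.out v⟩

/-- The induced subgraph on a subset `S` of the vertices (edges leaving `S` are dropped). -/
def AForest.induce (φ : AForest) (S : Finset (Fin φ.n)) : AForest where
  n := S.card
  out := fun i =>
    (φ.out (S.orderIsoOfFin rfl i).1).bind fun w =>
      if h : w ∈ S then some ((S.orderIsoOfFin rfl).symm ⟨w, h⟩) else none

/-- `(c, D)` is a partition of `φ` into aromatic trees: `D` is the set of cut
edges (given by their source vertices), `c` assigns each vertex to a part; the
parts are unions of components of the cut graph (each rootless component being
assigned to a rooted one), and each part contains exactly one root of the cut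
graph, hence is an aromatic tree. -/
def IsPart (φ : AForest) {m : ℕ} (c : Fin φ.n → Fin m) (D : Finset (Fin φ.n)) : Prop :=
  Function.Surjective c ∧
  (∀ v ∈ D, φ.out v ≠ none) ∧
  (∀ v, v ∉ D → ∀ w, φ.out v = some w → c v = c w) ∧
  (∀ j, ∃! v, c v = j ∧ (φ.out v = none ∨ v ∈ D))

/-- The part of the partition `(c, D)` assigned to `j`: the induced subgraph of
the cut graph on the fiber `c⁻¹(j)`. -/
noncomputable def partOf (φ : AForest) {m : ℕ} (c : Fin φ.n → Fin m) (D : Finset (Fin φ.n))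
    (j : Fin m) : AForest :=
  (φ.cut D).induce (Finset.univ.filter fun v => c v = j)

/-- The skeleton of a partition: collapse each part to a single vertex; the
outgoing edge of the part `j` is the (possibly cut) original outgoing edge of its
unique root. -/
noncomputable def skel (φ : AForest) {m : ℕ} (c : Fin φ.n → Fin m)
    (D : Finset (Fin φ.n)) (h : IsPart φ c D) : AForest :=
  ⟨m, fun j => (φ.out (h.2.2.2 j).choose).map c⟩

/-- The sum `Σ_p a(χ(p)) Π_θ b(θ)` over the partitions of `φ` into aromatic
trees satisfying the predicate `Q`. -/
noncomputable def substSum (b a : AForest → ℚ) (φ : AForest)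
    (Q : (m : ℕ) → (Fin φ.n → Fin m) → Finset (Fin φ.n) → Prop) : ℚ :=
  ∑ m ∈ Finset.range (φ.n + 1), ∑ c : Fin φ.n → Fin m, ∑ D : Finset (Fin φ.n),
    if h : IsPart φ c D ∧ Q m c D then
      a (skel φ c D h.1) * ∏ j : Fin m, b (partOf φ c D j)
    else 0

/-- The substitution product `(b ⋆ a)(φ) = Σ_{p ∈ P(φ)} a(χ(p)) Π_{θ} b(θ)`. -/
noncomputable def subst (b a : AForest → ℚ) (φ : AForest) : ℚ :=
  substSum b a φ fun _ _ _ => True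

/-- The automorphism group of a graph with out-degree at most one. -/
def autG {α : Type} (g : α → Option α) : Subgroup (Equiv.Perm α) where
  carrier := {e | ∀ v, g (e v) = (g v).map ⇑e}
  one_mem' := by intro v; simp
  mul_mem' := by
    intro a b ha hb v
    have h1 := ha (b v)
    have h2 := hb v
    simp only [Equiv.Perm.coe_mul, Function.comp_apply, h1, h2, Option.map_map]
  inv_mem' := by
    intro a ha v
    have h := ha (a⁻¹ v)
    rw [show a (a⁻¹ v) = v from by simp] at h
    rw [h]
    have h2 : ⇑a⁻¹ ∘ ⇑a = id := by ext x; simp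
    rw [Option.map_map, h2, Option.map_id]; rfl

/-- The number of labellings of a partition `p` of `φ` into aromatic trees
(bijective assignments of the parts to the vertices of the skeleton `χ(p)`
inducing the same collapsed graph) equals `|Aut(χ(p))|`. -/
theorem labellings_card_eq_aut_skeleton (φ : AForest) (m : ℕ)
    (c : Fin φ.n → Fin m) (D : Finset (Fin φ.n)) (h : IsPart φ c D) :
    Nat.card {ℓ : Equiv.Perm (Fin m) //
        ∃ h' : IsPart φ (⇑ℓ ∘ c) D, skel φ (⇑ℓ ∘ c) D h' = skel φ c D h}
      = Nat.card (autG (skel φ c D h).out) := by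
  classical
  set g := (skel φ c D h).out with hg
  have hpart : ∀ ℓ : Equiv.Perm (Fin m), IsPart φ (⇑ℓ ∘ c) D := by
    intro ℓ
    obtain ⟨hs, hD, hc, hr⟩ := h
    refine ⟨ℓ.surjective.comp hs, hD, ?_, ?_⟩
    · intro v hv w hw
      simp only [Function.comp_apply, hc v hv w hw]
    · intro j
      obtain ⟨v, hv, hu⟩ := hr (ℓ⁻¹ j)
      refine ⟨v, ⟨by simp [Function.comp_apply, hv.1], hv.2⟩, ?_⟩
      intro y hy
      refine hu y ⟨?_, hy.2⟩
      have : ℓ (c y) = j := hy.1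
      rw [← this]; simp
  have hroot : ∀ (ℓ : Equiv.Perm (Fin m)) (h' : IsPart φ (⇑ℓ ∘ c) D) (j : Fin m),
      (h'.2.2.2 j).choose = (h.2.2.2 (ℓ⁻¹ j)).choose := by
    intro ℓ h' j
    set r := (h.2.2.2 (ℓ⁻¹ j)).choose with hr
    have hrs := (h.2.2.2 (ℓ⁻¹ j)).choose_spec
    have : (⇑ℓ ∘ c) r = j ∧ (φ.out r = none ∨ r ∈ D) := by
      refine ⟨?_, hrs.1.2⟩
      have h1 : c r = ℓ⁻¹ j := hrs.1.1
      simp [Function.comp_apply, h1]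
    exact ((h'.2.2.2 j).choose_spec.2 r this).symm
  have hskel : ∀ (ℓ : Equiv.Perm (Fin m)) (h' : IsPart φ (⇑ℓ ∘ c) D),
      (skel φ (⇑ℓ ∘ c) D h').out = fun j => (g (ℓ⁻¹ j)).map ℓ := by
    intro ℓ h'
    funext j
    show (φ.out (h'.2.2.2 j).choose).map (⇑ℓ ∘ c)
        = ((φ.out (h.2.2.2 (ℓ⁻¹ j)).choose).map c).map ⇑ℓ
    rw [hroot ℓ h' j, Option.map_map]
  have key : ∀ ℓ : Equiv.Perm (Fin m),
      (∃ h' : IsPart φ (⇑ℓ ∘ c) D, skel φ (⇑ℓ ∘ c) D h' = skel φ c D h) ↔ ℓ ∈ autG g := by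
    intro ℓ
    constructor
    · rintro ⟨h', he⟩ v
      have hout : (skel φ (⇑ℓ ∘ c) D h').out = g := by
        exact eq_of_heq (congr_arg_heq AForest.out he)
      rw [hskel ℓ h'] at hout
      have := congrFun hout (ℓ v)
      exact this.symm.trans (congrArg (fun x => Option.map ⇑ℓ (g x)) (ℓ.symm_apply_apply v))
    · intro hℓ
      refine ⟨hpart ℓ, ?_⟩
      have hout : (skel φ (⇑ℓ ∘ c) D (hpart ℓ)).out = g := by
        rw [hskel ℓ (hpart ℓ)]
        funext j
        conv_rhs => rw [← Equiv.apply_symm_apply ℓ j]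
        exact (hℓ (ℓ⁻¹ j)).symm
      show AForest.mk m _ = AForest.mk m _
      exact congrArg (AForest.mk m) hout
  exact Nat.card_congr (Equiv.subtypeEquivRight key)
end

section
/- Define ∇b on rootless aromatic forests by (∇b)(φ) = Σ_{v ∈ V(φ)} b(φ_v), where φ_v is the aromatic tree (forest with one root) obtained from φ by deleting the unique edge out of v, provided φ is connected rootless so that every vertex has an outgoing edge and the deletion yields exactly one root. Then this agrees with the substitution-law specialization b ⋆ ℓ*, where ℓ is the 1-loop: the only partitions of φ with skeleton ℓ are given by choosing a vertex v and cutting its outgoing edge, and each such partition contributes b(φ_v); in particular b ⋆ ℓ* vanishes on any aromatic forest with at least one root. -/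
open scoped Classical

/-- Undirected adjacency underlying the directed graph. -/
def AForest.Adj (φ : AForest) (a b : Fin φ.n) : Prop :=
  φ.out a = some b ∨ φ.out b = some a

/-- The dual basis functional of the 1-loop `ℓ`: the indicator of its
isomorphism class. -/
noncomputable def loopStar : AForest → ℚ :=
  fun ψ => if AForest.Iso ψ loopA then 1 else 0

lemma not_iso_loopA_of_card (ψ : AForest) (h : ψ.n ≠ 1) : ¬ ψ.Iso loopA := by
  rintro ⟨e, -⟩
  exact h (Fin.equiv_iff_eq.1 ⟨e⟩)

lemma not_iso_loopA_of_root (ψ : AForest) (r : Fin ψ.n) (hr : ψ.out r = none) :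
    ¬ ψ.Iso loopA := by
  rintro ⟨e, he⟩
  have := he r
  rw [hr] at this
  simp [loopA] at this

lemma iso_loopA (ψ : AForest) (h1 : ψ.n = 1) (h2 : ∀ v, ψ.out v ≠ none) : ψ.Iso loopA := by
  refine ⟨(finCongr h1), fun v => ?_⟩
  cases hv : ψ.out v with
  | none => exact absurd hv (h2 v)
  | some w =>
    have : ψ.n = 1 := h1
    show some _ = some _
    congr 1
    apply Subsingleton.elim

lemma cut_singleton (φ : AForest) (v : Fin φ.n) :
    φ.cut {v} = ⟨φ.n, Function.update φ.out v none⟩ := by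
  show AForest.mk φ.n _ = _
  refine congrArg (AForest.mk φ.n) (funext fun w => ?_)
  by_cases h : w = v <;> simp [Function.update_apply, h]

lemma induce_univ_iso (ψ : AForest) : (ψ.induce Finset.univ).Iso ψ := by
  refine ⟨((Finset.univ : Finset (Fin ψ.n)).orderIsoOfFin rfl).toEquiv.trans
    (Equiv.subtypeUnivEquiv fun x => Finset.mem_univ x), fun i => ?_⟩
  simp only [AForest.induce, Equiv.trans_apply, Equiv.subtypeUnivEquiv_apply,
    RelIso.coe_fn_toEquiv]
  cases h : ψ.out ((((Finset.univ : Finset (Fin ψ.n)).orderIsoOfFin rfl) i :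
      {x // x ∈ Finset.univ}) : Fin ψ.n) with
  | none => simp [h]; exact h
  | some w => simp [h]; exact h.trans (congrArg some (congrArg Subtype.val (((Finset.univ : Finset (Fin ψ.n)).orderIsoOfFin rfl).apply_symm_apply ⟨w, Finset.mem_univ w⟩)).symm)

lemma isPart_singleton (φ : AForest) (hroot : ∀ v, φ.out v ≠ none)
    (c : Fin φ.n → Fin 1) (v : Fin φ.n) : IsPart φ c {v} := by
  refine ⟨fun j => ⟨v, Subsingleton.elim _ _⟩, fun w _ => hroot w,
    fun _ _ _ _ => Subsingleton.elim _ _, fun j => ⟨v, ⟨Subsingleton.elim _ _,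
      Or.inr (Finset.mem_singleton_self v)⟩, fun y hy => ?_⟩⟩
  rcases hy.2 with h | h
  · exact absurd h (hroot y)
  · simpa using h

lemma isPart_singleton_of (φ : AForest) (hroot : ∀ v, φ.out v ≠ none)
    (c : Fin φ.n → Fin 1) (D : Finset (Fin φ.n)) (h : IsPart φ c D) :
    ∃ v, D = {v} := by
  obtain ⟨v, hv, huniq⟩ := h.2.2.2 0
  refine ⟨v, Finset.eq_singleton_iff_unique_mem.2 ⟨?_, fun w hw =>
    huniq w ⟨Subsingleton.elim _ _, Or.inr hw⟩⟩⟩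
  rcases hv.2 with h' | h'
  · exact absurd h' (hroot v)
  · exact h'

lemma skel_no_root (φ : AForest) (hroot : ∀ v, φ.out v ≠ none) {m : ℕ}
    (c : Fin φ.n → Fin m) (D : Finset (Fin φ.n)) (h : IsPart φ c D) :
    ∀ j, (skel φ c D h).out j ≠ none := by
  intro j
  show (φ.out _).map c ≠ none
  cases hφ : φ.out (h.2.2.2 j).choose with
  | none => exact absurd hφ (hroot _)
  | some w => simp

private lemma subst_apply (b a : AForest → ℚ) (φ : AForest) :
    subst b a φ = ∑ m ∈ Finset.range (φ.n + 1), ∑ c : Fin φ.n → Fin m,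
      ∑ D : Finset (Fin φ.n), if h : IsPart φ c D then
        a (skel φ c D h) * ∏ j : Fin m, b (partOf φ c D j) else 0 := by
  unfold subst substSum
  refine Finset.sum_congr rfl fun m _ => Finset.sum_congr rfl fun c _ =>
    Finset.sum_congr rfl fun D _ => ?_
  by_cases h : IsPart φ c D
  · rw [dif_pos (⟨h, trivial⟩ : IsPart φ c D ∧ (fun _ _ _ => True) m c D), dif_pos h]
  · rw [dif_neg (fun hh => h hh.1), dif_neg h]

/-- The divergence `∇b = b ⋆ ℓ*`: for a connected rootless aromatic forest `φ`
(so every vertex has an outgoing edge, and deleting it yields exactly one root),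
`(b ⋆ ℓ*)(φ) = Σ_{v ∈ V(φ)} b(φ_v)` where `φ_v` deletes the edge out of `v`;
and `b ⋆ ℓ*` vanishes on every aromatic forest with at least one root. -/
theorem divergence_of_aromatic_series (b : AForest → ℚ)
    (hb_iso : ∀ φ ψ, AForest.Iso φ ψ → b φ = b ψ) :
    (∀ φ : AForest, (∀ v, φ.out v ≠ none) →
      (∀ v w : Fin φ.n, Relation.ReflTransGen φ.Adj v w) →
      subst b loopStar φ = ∑ v : Fin φ.n, b ⟨φ.n, Function.update φ.out v none⟩) ∧
    (∀ ψ : AForest, (∃ r, ψ.out r = none) → subst b loopStar ψ = 0) := by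
  constructor
  · intro φ hroot _hconn
    rw [subst_apply]
    rw [Finset.sum_eq_single 1]
    · rw [Fintype.sum_unique]
      set c : Fin φ.n → Fin 1 := default with hc
      have hval : ∀ v : Fin φ.n,
          (if h : IsPart φ c {v} then
            loopStar (skel φ c {v} h) * ∏ j : Fin 1, b (partOf φ c {v} j)
          else 0) = b ⟨φ.n, Function.update φ.out v none⟩ := by
        intro v
        rw [dif_pos (isPart_singleton φ hroot c v)]
        have hls : loopStar (skel φ c {v} (isPart_singleton φ hroot c v)) = 1 := by
          unfold loopStar
          rw [if_pos (iso_loopA _ rfl (skel_no_root φ hroot c {v} _))]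
        rw [hls, one_mul, Fin.prod_univ_one]
        have h1 : (Finset.univ.filter fun w => c w = (0 : Fin 1)) = Finset.univ :=
          Finset.filter_true_of_mem fun x _ => Subsingleton.elim _ _
        have h2 : partOf φ c {v} 0 = (φ.cut {v}).induce Finset.univ := by
          unfold partOf; congr 1; ext x; simp only [Finset.mem_filter, Finset.mem_univ, true_and, iff_true]; exact Subsingleton.elim _ _
        rw [h2, hb_iso _ _ (induce_univ_iso _), cut_singleton]
      calc (∑ D : Finset (Fin φ.n),
            if h : IsPart φ c D then
              loopStar (skel φ c D h) * ∏ j : Fin 1, b (partOf φ c D j)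
            else 0)
          = ∑ D ∈ Finset.univ.image (fun v : Fin φ.n => ({v} : Finset (Fin φ.n))),
            (if h : IsPart φ c D then
              loopStar (skel φ c D h) * ∏ j : Fin 1, b (partOf φ c D j)
            else 0) := by
            refine (Finset.sum_subset (Finset.subset_univ _) fun D _ hD => ?_).symm
            by_cases h : IsPart φ c D
            · obtain ⟨v, rfl⟩ := isPart_singleton_of φ hroot c D h
              exact absurd (Finset.mem_image.2 ⟨v, Finset.mem_univ v, rfl⟩) hD
            · rw [dif_neg h]
        _ = ∑ v : Fin φ.n,
            (if h : IsPart φ c {v} then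
              loopStar (skel φ c {v} h) * ∏ j : Fin 1, b (partOf φ c {v} j)
            else 0) :=
            Finset.sum_image fun a _ a' _ h => Finset.singleton_injective h
        _ = ∑ v : Fin φ.n, b ⟨φ.n, Function.update φ.out v none⟩ :=
            Finset.sum_congr rfl fun v _ => hval v
    · intro m _ hm
      refine Finset.sum_eq_zero fun c _ => Finset.sum_eq_zero fun D _ => ?_
      by_cases h : IsPart φ c D
      · rw [dif_pos h]
        have : loopStar (skel φ c D h) = 0 := by
          unfold loopStar
          rw [if_neg (not_iso_loopA_of_card _ hm)]
        rw [this, zero_mul]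
      · rw [dif_neg h]
    · intro hn
      have hn0 : φ.n = 0 := by
        simp only [Finset.mem_range] at hn; omega
      refine Finset.sum_eq_zero fun c _ => Finset.sum_eq_zero fun D _ => ?_
      rw [dif_neg]
      intro hp
      obtain ⟨x, -⟩ := hp.1 0
      have := x.isLt
      omega
  · rintro ψ ⟨r, hr⟩
    rw [subst_apply]
    refine Finset.sum_eq_zero fun m _ => Finset.sum_eq_zero fun c _ =>
      Finset.sum_eq_zero fun D _ => ?_
    by_cases h : IsPart ψ c D
    · rw [dif_pos h]
      have hsk : (skel ψ c D h).out (c r) = none := by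
        obtain ⟨-, huniq⟩ := (h.2.2.2 (c r)).choose_spec
        have hw : (h.2.2.2 (c r)).choose = r := (huniq r ⟨rfl, Or.inl hr⟩).symm
        show (ψ.out _).map c = none
        rw [hw, hr]
        rfl
      have : loopStar (skel ψ c D h) = 0 := by
        unfold loopStar
        rw [if_neg (not_iso_loopA_of_root _ _ hsk)]
      rw [this, zero_mul]
    · rw [dif_neg h]
end
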